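/- In a finite MDP with n states, if d0 is not sure strongly synchronizing in T, then for every strategy σ there exist infinitely many positions i_0 < i_1 < i_2 < ... with i_0 ≤ n and i_{j+1} − i_j ≤ n for all j, such that M^σ_{i_j}(T) < 1 for each j. -/

import Mathlib

open scoped BigOperators
open Classical Filter

/-- A finite Markov decision process with real transition probabilities. -/
structure MDP (Q A : Type) [Fintype Q] [Fintype A] where
  δ : Q → A → Q → ℝ
  δ_nonneg : ∀ q a q', 0 ≤ δ q a q'
  δ_sum : ∀ q a, ∑ q', δ q a q' = 1

namespace MDP

variable {Q A : Type} [Fintype Q] [Fintype A]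

/-- `d` is a probability distribution. -/
def IsDist (d : Q → ℝ) : Prop := (∀ q, 0 ≤ d q) ∧ ∑ q, d q = 1

/-- A (randomized, history-dependent) strategy maps a history (list of past
state-action pairs) and the current state to a distribution over actions. -/
def IsStrategy (σ : List (Q × A) → Q → A → ℝ) : Prop :=
  (∀ h q a, 0 ≤ σ h q a) ∧ ∀ h q, ∑ a, σ h q a = 1

/-- The probability of the finite path `qs` (with actions `as`) of length `i`,
under strategy `σ` from initial distribution `d0`. -/
noncomputable def pathProb (M : MDP Q A) (σ : List (Q × A) → Q → A → ℝ)
    (d0 : Q → ℝ) (i : ℕ) (qs : Fin (i + 1) → Q) (as : Fin i → A) : ℝ :=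
  d0 (qs 0) * ∏ j : Fin i,
    (σ (List.ofFn (fun k : Fin j.val =>
          (qs ⟨k.val, by have := k.isLt; have := j.isLt; omega⟩,
           as ⟨k.val, by have := k.isLt; have := j.isLt; omega⟩)))
        (qs j.castSucc) (as j))
      * M.δ (qs j.castSucc) (as j) (qs j.succ)

/-- The distribution over states after `i` steps (`M^σ_i`). -/
noncomputable def stepDist (M : MDP Q A) (σ : List (Q × A) → Q → A → ℝ)
    (d0 : Q → ℝ) (i : ℕ) (q : Q) : ℝ :=
  ∑ qs : Fin (i + 1) → Q, ∑ as : Fin i → A,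
    if qs (Fin.last i) = q then M.pathProb σ d0 i qs as else 0

/-- The probability mass that a (sub)distribution assigns to a set `T`. -/
noncomputable def mass (d : Q → ℝ) (T : Set Q) : ℝ := ∑ q, T.indicator d q

/-- The support of a (sub)distribution. -/
def supp {α : Type} (d : α → ℝ) : Set α := {q | 0 < d q}

/-- One-step sure predecessors of `Y`. -/
def Pre (M : MDP Q A) (Y : Set Q) : Set Q :=
  {q | ∃ a, ∀ q', 0 < M.δ q a q' → q' ∈ Y}

/-- Probability of reaching `T` within `i` steps. -/
noncomputable def reachProb (M : MDP Q A) (σ : List (Q × A) → Q → A → ℝ)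
    (d0 : Q → ℝ) (T : Set Q) (i : ℕ) : ℝ :=
  ∑ qs : Fin (i + 1) → Q, ∑ as : Fin i → A,
    if ∃ j, qs j ∈ T then M.pathProb σ d0 i qs as else 0

/-- `d0` is almost-sure winning for the reachability objective `◇T`:
some strategy reaches `T` with probability one. -/
def ASReach (M : MDP Q A) (d0 : Q → ℝ) (T : Set Q) : Prop :=
  ∃ σ, IsStrategy σ ∧ (⨆ i : ℕ, M.reachProb σ d0 T i) = 1

/-- `d0` is limit-sure eventually synchronizing in `T`. -/
def LimitSureEventually (M : MDP Q A) (d0 : Q → ℝ) (T : Set Q) : Prop :=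
  ∀ ε > (0 : ℝ), ∃ σ, IsStrategy σ ∧ ∃ i, 1 - ε ≤ mass (M.stepDist σ d0 i) T

/-- `d0` is almost-sure weakly synchronizing in `T`. -/
def ASWeakly (M : MDP Q A) (d0 : Q → ℝ) (T : Set Q) : Prop :=
  ∃ σ, IsStrategy σ ∧ ∀ ε > (0 : ℝ), {i : ℕ | 1 - ε ≤ mass (M.stepDist σ d0 i) T}.Infinite

/-- `d0` is almost-sure strongly synchronizing in `T`. -/
def ASStrongly (M : MDP Q A) (d0 : Q → ℝ) (T : Set Q) : Prop :=
  ∃ σ, IsStrategy σ ∧ ∀ ε > (0 : ℝ), ∃ N, ∀ i ≥ N, 1 - ε ≤ mass (M.stepDist σ d0 i) T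

/-- The uniform distribution on a set `S`. -/
noncomputable def uniformOn (S : Set Q) : Q → ℝ :=
  fun q => if q ∈ S then 1 / (S.ncard : ℝ) else 0

/-- The uniform strategy, playing all actions uniformly at random. -/
noncomputable def uniformStrategy (Q A : Type) [Fintype A] :
    List (Q × A) → Q → A → ℝ :=
  fun _ _ _ => 1 / (Fintype.card A : ℝ)

/-- Action `a` is allowed in `q` w.r.t. `S` if all its successors stay in `S`. -/
def Allowed (M : MDP Q A) (S : Set Q) (q : Q) (a : A) : Prop :=
  ∀ q', 0 < M.δ q a q' → q' ∈ S

/-- Edge relation within `S` given the allowed actions. -/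
def ECEdge (M : MDP Q A) (S : Set Q) (q q' : Q) : Prop :=
  q ∈ S ∧ q' ∈ S ∧ ∃ a, M.Allowed S q a ∧ 0 < M.δ q a q'

/-- `S` is an end-component: closed and strongly connected via allowed actions. -/
def IsEC (M : MDP Q A) (S : Set Q) : Prop :=
  (∀ q ∈ S, ∃ a, M.Allowed S q a) ∧
  ∀ q ∈ S, ∀ q' ∈ S, Relation.ReflTransGen (M.ECEdge S) q q'

/-- The union of all end-components. -/
def ECUnion (M : MDP Q A) : Set Q := ⋃₀ {S | M.IsEC S}

/-- Positive always synchronizing in `T`. -/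
def PosAlways (M : MDP Q A) (d0 : Q → ℝ) (T : Set Q) : Prop :=
  ∃ σ, IsStrategy σ ∧ ∀ i, 0 < mass (M.stepDist σ d0 i) T

/-- Positive eventually synchronizing in `T`. -/
def PosEvent (M : MDP Q A) (d0 : Q → ℝ) (T : Set Q) : Prop :=
  ∃ σ, IsStrategy σ ∧ ∃ i, 0 < mass (M.stepDist σ d0 i) T

/-- Positive weakly synchronizing in `T`. -/
def PosWeakly (M : MDP Q A) (d0 : Q → ℝ) (T : Set Q) : Prop :=
  ∃ σ, IsStrategy σ ∧ ∀ N, ∃ i ≥ N, 0 < mass (M.stepDist σ d0 i) T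

/-- Positive strongly synchronizing in `T`. -/
def PosStrongly (M : MDP Q A) (d0 : Q → ℝ) (T : Set Q) : Prop :=
  ∃ σ, IsStrategy σ ∧ ∃ N, ∀ i ≥ N, 0 < mass (M.stepDist σ d0 i) T

/-- Bounded always synchronizing in `T`. -/
def BndAlways (M : MDP Q A) (d0 : Q → ℝ) (T : Set Q) : Prop :=
  ∃ σ, IsStrategy σ ∧ ∃ ε > (0 : ℝ), ∀ i, ε < mass (M.stepDist σ d0 i) T

/-- Bounded eventually synchronizing in `T`. -/
def BndEvent (M : MDP Q A) (d0 : Q → ℝ) (T : Set Q) : Prop :=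
  ∃ σ, IsStrategy σ ∧ ∃ ε > (0 : ℝ), ∃ i, ε < mass (M.stepDist σ d0 i) T

/-- Bounded weakly synchronizing in `T`. -/
def BndWeakly (M : MDP Q A) (d0 : Q → ℝ) (T : Set Q) : Prop :=
  ∃ σ, IsStrategy σ ∧ ∃ ε > (0 : ℝ), ∀ N, ∃ i ≥ N, ε < mass (M.stepDist σ d0 i) T

/-- Bounded strongly synchronizing in `T`. -/
def BndStrongly (M : MDP Q A) (d0 : Q → ℝ) (T : Set Q) : Prop :=
  ∃ σ, IsStrategy σ ∧ ∃ ε > (0 : ℝ), ∃ N, ∀ i ≥ N, ε < mass (M.stepDist σ d0 i) T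

def histOf {i : ℕ} (qs : Fin (i+1) → Q) (as : Fin i → A) : List (Q × A) :=
  List.ofFn fun k : Fin i => (qs k.castSucc, as k)

lemma snoc_eval {α : Type} {n : ℕ} (f : Fin (n+1) → α) (x : α) (k : ℕ)
    (hk2 : k < n + 2) (hk : k < n + 1) :
    (Fin.snoc f x : Fin (n+2) → α) ⟨k, hk2⟩ = f ⟨k, hk⟩ := by
  have : (⟨k, hk2⟩ : Fin (n+2)) = Fin.castSucc ⟨k, hk⟩ := rfl
  rw [this, Fin.snoc_castSucc]

lemma snoc_eval' {α : Type} {n : ℕ} (f : Fin n → α) (x : α) (k : ℕ)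
    (hk2 : k < n + 1) (hk : k < n) :
    (Fin.snoc f x : Fin (n+1) → α) ⟨k, hk2⟩ = f ⟨k, hk⟩ := by
  have : (⟨k, hk2⟩ : Fin (n+1)) = Fin.castSucc ⟨k, hk⟩ := rfl
  rw [this, Fin.snoc_castSucc]

lemma pathProb_snoc (M : MDP Q A) (σ : List (Q × A) → Q → A → ℝ) (d0 : Q → ℝ)
    (i : ℕ) (qs : Fin (i+1) → Q) (as : Fin i → A) (q' : Q) (a : A) :
    M.pathProb σ d0 (i+1) (Fin.snoc qs q') (Fin.snoc as a) =
      M.pathProb σ d0 i qs as *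
        (σ (histOf qs as) (qs (Fin.last i)) a * M.δ (qs (Fin.last i)) a q') := by
  unfold pathProb
  rw [Fin.prod_univ_castSucc, ← mul_assoc]
  congr 1
  · congr 1
    · apply Finset.prod_congr rfl
      intro j _
      have h1 : (Fin.snoc qs q' : Fin (i+2) → Q) (Fin.castSucc (Fin.castSucc j)) = qs (Fin.castSucc j) := by simp
      have h2 : (Fin.snoc as a : Fin (i+1) → A) (Fin.castSucc j) = as j := by simp
      have h3 : (Fin.snoc qs q' : Fin (i+2) → Q) ((Fin.castSucc j).succ) = qs j.succ := by
        rw [Fin.succ_castSucc, Fin.snoc_castSucc]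
      have hl : ∀ (p1 : ∀ k : Fin j.val, k.val < i+2) (p2 : ∀ k : Fin j.val, k.val < i+1)
          (p3 : ∀ k : Fin j.val, k.val < i+1) (p4 : ∀ k : Fin j.val, k.val < i),
          (List.ofFn fun k : Fin j.val =>
            ((Fin.snoc qs q' : Fin (i+2) → Q) ⟨k.val, p1 k⟩,
             (Fin.snoc as a : Fin (i+1) → A) ⟨k.val, p2 k⟩))
          = List.ofFn fun k : Fin j.val => (qs ⟨k.val, p3 k⟩, as ⟨k.val, p4 k⟩) := by
        intro p1 p2 p3 p4
        apply congrArg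
        funext k
        rw [snoc_eval qs q' k.val (p1 k) (p3 k), snoc_eval' as a k.val (p2 k) (p4 k)]
      simp only [Fin.coe_castSucc, h1, h2, h3]
      congr 1
      exact congrFun (congrFun (congrArg σ (hl _ _ _ _)) _) _
  · have h1 : (Fin.snoc qs q' : Fin (i+2) → Q) (Fin.castSucc (Fin.last i)) = qs (Fin.last i) := by simp
    have h2 : (Fin.snoc as a : Fin (i+1) → A) (Fin.last i) = a := by simp
    have h3 : (Fin.snoc qs q' : Fin (i+2) → Q) ((Fin.last i).succ) = q' := by
      rw [Fin.succ_last]; simp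
    have hl : ∀ (p1 : ∀ k : Fin i, k.val < i+2) (p2 : ∀ k : Fin i, k.val < i+1),
        (List.ofFn fun k : Fin i =>
          ((Fin.snoc qs q' : Fin (i+2) → Q) ⟨k.val, p1 k⟩,
           (Fin.snoc as a : Fin (i+1) → A) ⟨k.val, p2 k⟩))
        = histOf qs as := by
      intro p1 p2
      apply congrArg
      funext k
      rw [snoc_eval qs q' k.val (p1 k) (by omega), snoc_eval' as a k.val (p2 k) k.isLt]
      rfl
    simp only [Fin.val_last, h1, h2, h3]
    congr 1
    exact congrFun (congrFun (congrArg σ (hl _ _)) _) _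


lemma pathProb_nonneg (M : MDP Q A) {σ : List (Q × A) → Q → A → ℝ}
    (hσ : IsStrategy σ) {d0 : Q → ℝ} (hd0 : IsDist d0)
    (i : ℕ) (qs : Fin (i+1) → Q) (as : Fin i → A) :
    0 ≤ M.pathProb σ d0 i qs as :=
  mul_nonneg (hd0.1 _) (Finset.prod_nonneg fun j _ =>
    mul_nonneg (hσ.1 _ _ _) (M.δ_nonneg _ _ _))

lemma stepDist_nonneg (M : MDP Q A) {σ : List (Q × A) → Q → A → ℝ}
    (hσ : IsStrategy σ) {d0 : Q → ℝ} (hd0 : IsDist d0) (i : ℕ) (q : Q) :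
    0 ≤ M.stepDist σ d0 i q := by
  apply Finset.sum_nonneg; intro qs _
  apply Finset.sum_nonneg; intro as _
  split
  · exact M.pathProb_nonneg hσ hd0 i qs as
  · exact le_rfl

lemma sum_pathProb (M : MDP Q A) {σ : List (Q × A) → Q → A → ℝ}
    (hσ : IsStrategy σ) {d0 : Q → ℝ} (hd0 : IsDist d0) :
    ∀ i, ∑ qs : Fin (i+1) → Q, ∑ as : Fin i → A, M.pathProb σ d0 i qs as = 1 := by
  intro i
  induction i with
  | zero =>
    have h1 : ∀ (qs : Fin 1 → Q) (as : Fin 0 → A),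
        M.pathProb σ d0 0 qs as = d0 (qs 0) := by
      intro qs as; simp [pathProb]
    calc ∑ qs : Fin 1 → Q, ∑ as : Fin 0 → A, M.pathProb σ d0 0 qs as
        = ∑ qs : Fin 1 → Q, d0 (qs 0) := by
          apply Finset.sum_congr rfl; intro qs _
          simp [h1]
      _ = ∑ q : Q, d0 q :=
          Fintype.sum_equiv (Equiv.funUnique (Fin 1) Q) _ _ (fun qs => rfl)
      _ = 1 := hd0.2
  | succ n ih =>
    have hin : ∀ (hst : List (Q × A)) (q : Q),
        ∑ b : A, ∑ x : Q, σ hst q b * M.δ q b x = 1 := by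
      intro hst q
      calc ∑ b : A, ∑ x : Q, σ hst q b * M.δ q b x
          = ∑ b : A, σ hst q b * ∑ x : Q, M.δ q b x := by
            simp [Finset.mul_sum]
        _ = ∑ b : A, σ hst q b := by simp [M.δ_sum]
        _ = 1 := hσ.2 hst q
    calc ∑ qs : Fin (n+2) → Q, ∑ as : Fin (n+1) → A, M.pathProb σ d0 (n+1) qs as
        = ∑ p : Q × (Fin (n+1) → Q), ∑ r : A × (Fin n → A),
            M.pathProb σ d0 n p.2 r.2 *
              (σ (histOf p.2 r.2) (p.2 (Fin.last n)) r.1 *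
                M.δ (p.2 (Fin.last n)) r.1 p.1) := by
          rw [← Equiv.sum_comp (Fin.snocEquiv (fun _ => Q))
            (fun qs => ∑ as : Fin (n+1) → A, M.pathProb σ d0 (n+1) qs as)]
          apply Finset.sum_congr rfl; intro p _
          rw [← Equiv.sum_comp (Fin.snocEquiv (fun _ => A))
            (fun as => M.pathProb σ d0 (n+1) (Fin.snocEquiv (fun _ => Q) p) as)]
          apply Finset.sum_congr rfl; intro r _
          exact M.pathProb_snoc σ d0 n p.2 r.2 p.1 r.1
      _ = ∑ f : Fin (n+1) → Q, ∑ g : Fin n → A,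
            M.pathProb σ d0 n f g *
              (∑ b : A, ∑ x : Q, σ (histOf f g) (f (Fin.last n)) b *
                M.δ (f (Fin.last n)) b x) := by
          rw [Fintype.sum_prod_type, Finset.sum_comm]
          apply Finset.sum_congr rfl; intro f _
          rw [Finset.sum_comm]
          rw [Fintype.sum_prod_type]
          rw [Finset.sum_comm]
          apply Finset.sum_congr rfl; intro g _
          simp only [← Finset.mul_sum]
      _ = ∑ f : Fin (n+1) → Q, ∑ g : Fin n → A, M.pathProb σ d0 n f g := by
          apply Finset.sum_congr rfl; intro f _
          apply Finset.sum_congr rfl; intro g _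
          rw [hin, mul_one]
      _ = 1 := ih



lemma sum_stepDist (M : MDP Q A) {σ : List (Q × A) → Q → A → ℝ}
    (hσ : IsStrategy σ) {d0 : Q → ℝ} (hd0 : IsDist d0) (i : ℕ) :
    ∑ q, M.stepDist σ d0 i q = 1 := by
  unfold stepDist
  rw [Finset.sum_comm]
  calc ∑ qs : Fin (i+1) → Q, ∑ q : Q, ∑ as : Fin i → A,
        (if qs (Fin.last i) = q then M.pathProb σ d0 i qs as else 0)
      = ∑ qs : Fin (i+1) → Q, ∑ as : Fin i → A, M.pathProb σ d0 i qs as := by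
        apply Finset.sum_congr rfl; intro qs _
        rw [Finset.sum_comm]
        apply Finset.sum_congr rfl; intro as _
        simp
    _ = 1 := M.sum_pathProb hσ hd0 i

lemma stepDist_pos_iff (M : MDP Q A) {σ : List (Q × A) → Q → A → ℝ}
    (hσ : IsStrategy σ) {d0 : Q → ℝ} (hd0 : IsDist d0) (i : ℕ) (q : Q) :
    0 < M.stepDist σ d0 i q ↔
      ∃ qs as, qs (Fin.last i) = q ∧ 0 < M.pathProb σ d0 i qs as := by
  constructor
  · intro h
    by_contra hc
    push_neg at hc
    have hz : M.stepDist σ d0 i q = 0 := by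
      apply Finset.sum_eq_zero; intro qs _
      apply Finset.sum_eq_zero; intro as _
      split
      · next heq =>
        have := hc qs as heq
        have hn := M.pathProb_nonneg hσ hd0 i qs as
        linarith
      · rfl
    rw [hz] at h; exact lt_irrefl _ h
  · rintro ⟨qs, as, hlast, hpos⟩
    have hnn : ∀ (qs' : Fin (i+1) → Q) (as' : Fin i → A),
        0 ≤ (if qs' (Fin.last i) = q then M.pathProb σ d0 i qs' as' else 0) := by
      intro qs' as'
      by_cases hh : qs' (Fin.last i) = q
      · rw [if_pos hh]; exact M.pathProb_nonneg hσ hd0 i qs' as'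
      · rw [if_neg hh]
    have h1 : (if qs (Fin.last i) = q then M.pathProb σ d0 i qs as else 0)
        ≤ ∑ as' : Fin i → A,
          (if qs (Fin.last i) = q then M.pathProb σ d0 i qs as' else 0) :=
      Finset.single_le_sum (fun as' _ => hnn qs as') (Finset.mem_univ as)
    have h2 : (∑ as' : Fin i → A,
          (if qs (Fin.last i) = q then M.pathProb σ d0 i qs as' else 0))
        ≤ M.stepDist σ d0 i q :=
      Finset.single_le_sum
        (fun qs' _ => Finset.sum_nonneg fun as' _ => hnn qs' as')
        (Finset.mem_univ qs)
    have h3 : 0 < (if qs (Fin.last i) = q then M.pathProb σ d0 i qs as else 0) := by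
      rw [if_pos hlast]; exact hpos
    linarith

lemma pos_factors {x y z : ℝ} (hx : 0 ≤ x) (hy : 0 ≤ y) (hz : 0 ≤ z)
    (h : 0 < x * (y * z)) : 0 < x ∧ 0 < y ∧ 0 < z := by
  refine ⟨?_, ?_, ?_⟩
  · rcases hx.lt_or_eq with h' | h'
    · exact h'
    · exfalso; rw [← h'] at h; simp at h
  · rcases hy.lt_or_eq with h' | h'
    · exact h'
    · exfalso; rw [← h'] at h; simp at h
  · rcases hz.lt_or_eq with h' | h'
    · exact h'
    · exfalso; rw [← h'] at h; simp at h

lemma stepDist_pos_succ (M : MDP Q A) {σ : List (Q × A) → Q → A → ℝ}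
    (hσ : IsStrategy σ) {d0 : Q → ℝ} (hd0 : IsDist d0) {i : ℕ} {q' : Q}
    (h : 0 < M.stepDist σ d0 (i+1) q') :
    ∃ (qs : Fin (i+1) → Q) (as : Fin i → A) (a : A),
      0 < M.pathProb σ d0 i qs as ∧
      0 < σ (histOf qs as) (qs (Fin.last i)) a ∧
      0 < M.δ (qs (Fin.last i)) a q' := by
  obtain ⟨Qs, As, hlast, hpos⟩ := (M.stepDist_pos_iff hσ hd0 (i+1) q').1 h
  have hQ : Qs = Fin.snoc (Fin.init Qs) (Qs (Fin.last (i+1))) := (Fin.snoc_init_self _).symm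
  have hA : As = Fin.snoc (Fin.init As) (As (Fin.last i)) := (Fin.snoc_init_self _).symm
  rw [hQ, hA, M.pathProb_snoc] at hpos
  have hfac := pos_factors (M.pathProb_nonneg hσ hd0 i _ _) (hσ.1 _ _ _)
    (M.δ_nonneg _ _ _) hpos
  refine ⟨Fin.init Qs, Fin.init As, As (Fin.last i), hfac.1, hfac.2.1, ?_⟩
  rw [hlast] at hfac
  exact hfac.2.2

lemma stepDist_pos_of_step (M : MDP Q A) {σ : List (Q × A) → Q → A → ℝ}
    (hσ : IsStrategy σ) {d0 : Q → ℝ} (hd0 : IsDist d0) {i : ℕ}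
    {qs : Fin (i+1) → Q} {as : Fin i → A} (hp : 0 < M.pathProb σ d0 i qs as)
    {a : A} {q' : Q} (ha : 0 < σ (histOf qs as) (qs (Fin.last i)) a)
    (hd : 0 < M.δ (qs (Fin.last i)) a q') :
    0 < M.stepDist σ d0 (i+1) q' := by
  refine (M.stepDist_pos_iff hσ hd0 (i+1) q').2
    ⟨Fin.snoc qs q', Fin.snoc as a, by simp, ?_⟩
  rw [M.pathProb_snoc]
  exact mul_pos hp (mul_pos ha hd)

lemma exists_pos_action {σ : List (Q × A) → Q → A → ℝ} (hσ : IsStrategy σ)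
    (hst : List (Q × A)) (q : Q) : ∃ a, 0 < σ hst q a := by
  by_contra hc
  push_neg at hc
  have hz : ∑ a, σ hst q a = 0 :=
    Finset.sum_eq_zero fun a _ => le_antisymm (hc a) (hσ.1 hst q a)
  rw [hσ.2 hst q] at hz
  exact one_ne_zero hz

lemma mass_le_sum {d : Q → ℝ} (hd : ∀ q, 0 ≤ d q) (T : Set Q) :
    mass d T ≤ ∑ q, d q := by
  apply Finset.sum_le_sum
  intro q _
  exact Set.indicator_le_self' (s := T) (fun q _ => hd q) q

lemma mass_eq_one_of_supp {d : Q → ℝ} (hd : ∀ q, 0 ≤ d q) (hsum : ∑ q, d q = 1)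
    {T : Set Q} (hsupp : ∀ q, 0 < d q → q ∈ T) : mass d T = 1 := by
  unfold mass
  rw [← hsum]
  apply Finset.sum_congr rfl
  intro q _
  by_cases hq : q ∈ T
  · rw [Set.indicator_of_mem hq]
  · rw [Set.indicator_of_notMem hq]
    have : d q = 0 := by
      rcases (hd q).lt_or_eq with h' | h'
      · exact absurd (hsupp q h') hq
      · exact h'.symm
    rw [this]

lemma supp_subset_of_mass_eq_one {d : Q → ℝ} (hd : ∀ q, 0 ≤ d q)
    (hsum : ∑ q, d q = 1) {T : Set Q} (hm : mass d T = 1) :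
    ∀ q, 0 < d q → q ∈ T := by
  intro q hq
  by_contra hqT
  have key : ∑ q', (d q' - T.indicator d q') = 0 := by
    rw [Finset.sum_sub_distrib, hsum]
    unfold mass at hm
    rw [hm]; ring
  have hnn : ∀ q' ∈ Finset.univ, 0 ≤ d q' - T.indicator d q' := by
    intro q' _
    have := Set.indicator_le_self' (s := T) (fun x _ => hd x) q'
    linarith
  have := (Finset.sum_eq_zero_iff_of_nonneg hnn).1 key q (Finset.mem_univ q)
  rw [Set.indicator_of_notMem hqT] at this
  linarith


lemma Pre_mono (M : MDP Q A) {X Y : Set Q} (h : X ⊆ Y) : M.Pre X ⊆ M.Pre Y := by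
  rintro q ⟨a, ha⟩
  exact ⟨a, fun q' hq' => h (ha q' hq')⟩

/-- The safety iteration. -/
noncomputable def Wseq (M : MDP Q A) (T : Set Q) : ℕ → Set Q
  | 0 => Set.univ
  | k+1 => T ∩ M.Pre (M.Wseq T k)

lemma Wseq_antitone (M : MDP Q A) (T : Set Q) :
    ∀ k, M.Wseq T (k+1) ⊆ M.Wseq T k := by
  intro k
  induction k with
  | zero => exact fun q _ => Set.mem_univ q
  | succ m ih =>
    intro q hq
    exact ⟨hq.1, M.Pre_mono ih hq.2⟩

lemma Wseq_stab (M : MDP Q A) (T : Set Q) {k : ℕ}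
    (hk : M.Wseq T (k+1) = M.Wseq T k) :
    ∀ m, k ≤ m → M.Wseq T m = M.Wseq T k := by
  intro m hm
  induction m with
  | zero =>
    have : k = 0 := by omega
    rw [this]
  | succ t ih =>
    rcases Nat.lt_or_ge k (t+1) with hlt | hge
    · have ht : k ≤ t := by omega
      have := ih ht
      show T ∩ M.Pre (M.Wseq T t) = M.Wseq T k
      rw [this]
      exact hk
    · have : k = t + 1 := by omega
      rw [this]
  
lemma Wseq_fix (M : MDP Q A) (T : Set Q) (hQ : Nonempty Q) (hA : Nonempty A) :
    M.Wseq T (Fintype.card Q) = T ∩ M.Pre (M.Wseq T (Fintype.card Q)) := by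
  set n := Fintype.card Q with hn
  have hstab : ∃ k ≤ n, M.Wseq T (k+1) = M.Wseq T k := by
    by_contra hc
    push_neg at hc
    have hcard : ∀ k, k ≤ n + 1 → (M.Wseq T k).ncard + k ≤ n := by
      intro k
      induction k with
      | zero =>
        intro _
        simp [Wseq, Set.ncard_univ, Nat.card_eq_fintype_card, hn]
      | succ t ih =>
        intro ht
        have hss : M.Wseq T (t+1) ⊂ M.Wseq T t :=
          (M.Wseq_antitone T t).ssubset_of_ne (hc t (by omega))
        have hlt : (M.Wseq T (t+1)).ncard < (M.Wseq T t).ncard :=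
          Set.ncard_lt_ncard hss (Set.toFinite _)
        have := ih (by omega)
        omega
    have h1 := hcard (n+1) (le_refl _)
    omega
  obtain ⟨k, hk, heq⟩ := hstab
  have h1 := M.Wseq_stab T heq n hk
  rw [h1]
  exact heq.symm

lemma pathProb_congr (M : MDP Q A) {σ₁ σ₂ : List (Q × A) → Q → A → ℝ}
    (d0 : Q → ℝ) (i : ℕ)
    (h : ∀ hst q a, hst.length < i → σ₁ hst q a = σ₂ hst q a)
    (qs : Fin (i+1) → Q) (as : Fin i → A) :
    M.pathProb σ₁ d0 i qs as = M.pathProb σ₂ d0 i qs as := by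
  unfold pathProb
  congr 1
  apply Finset.prod_congr rfl
  intro j _
  congr 1
  apply h
  rw [List.length_ofFn]
  exact j.isLt

lemma stepDist_congr (M : MDP Q A) {σ₁ σ₂ : List (Q × A) → Q → A → ℝ}
    (d0 : Q → ℝ) (i : ℕ)
    (h : ∀ hst q a, hst.length < i → σ₁ hst q a = σ₂ hst q a) (q : Q) :
    M.stepDist σ₁ d0 i q = M.stepDist σ₂ d0 i q := by
  unfold stepDist
  apply Finset.sum_congr rfl; intro qs _
  apply Finset.sum_congr rfl; intro as _
  rw [M.pathProb_congr d0 i h qs as]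

lemma length_histOf {i : ℕ} (qs : Fin (i+1) → Q) (as : Fin i → A) :
    (histOf qs as).length = i := by
  unfold histOf; rw [List.length_ofFn]

end MDP

open MDP in
/-- If `d0` is not sure strongly synchronizing in `T`, then for every strategy
there are infinitely many positions `i_0 < i_1 < ⋯` with `i_0 ≤ n` and
`i_{j+1} - i_j ≤ n`, at which `M^σ_{i_j}(T) < 1`. -/
theorem stmt8 {Q A : Type} [Fintype Q] [Fintype A] (M : MDP Q A)
    (d0 : Q → ℝ) (hd0 : IsDist d0) (T : Set Q)
    (h : ¬ ∃ σ, IsStrategy σ ∧ ∃ N : ℕ, ∀ i ≥ N, mass (M.stepDist σ d0 i) T = 1) :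
    ∀ σ, IsStrategy σ → ∃ f : ℕ → ℕ, StrictMono f ∧ f 0 ≤ Fintype.card Q ∧
      (∀ j, f (j + 1) - f j ≤ Fintype.card Q) ∧
      ∀ j, mass (M.stepDist σ d0 (f j)) T < 1 := by
  intro σ hσ
  have hQ : Nonempty Q := by
    by_contra hq
    rw [not_nonempty_iff] at hq
    have h2 := hd0.2
    rw [Finset.univ_eq_empty, Finset.sum_empty] at h2
    exact one_ne_zero h2.symm
  haveI := hQ
  have hA : Nonempty A := by
    by_contra ha
    rw [not_nonempty_iff] at ha
    have h2 := hσ.2 [] (Classical.arbitrary Q)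
    rw [Finset.univ_eq_empty, Finset.sum_empty] at h2
    exact one_ne_zero h2.symm
  haveI := hA
  set n := Fintype.card Q with hn
  have hn1 : 1 ≤ n := Fintype.card_pos
  have hW : M.Wseq T n = T ∩ M.Pre (M.Wseq T n) := M.Wseq_fix T hQ hA
  have main : ∀ p : ℕ, ∃ i, p ≤ i ∧ i < p + n ∧ mass (M.stepDist σ d0 i) T < 1 := by
    intro p
    by_contra hc
    push_neg at hc
    have hgood : ∀ j, j < n → ∀ q, 0 < M.stepDist σ d0 (p+j) q → q ∈ T := by
      intro j hj
      have hm : mass (M.stepDist σ d0 (p+j)) T = 1 := by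
        have h1 := hc (p+j) (by omega) (by omega)
        have h2 : mass (M.stepDist σ d0 (p+j)) T ≤ 1 := by
          have h3 := mass_le_sum (fun q => M.stepDist_nonneg hσ hd0 (p+j) q) T
          rw [M.sum_stepDist hσ hd0 (p+j)] at h3
          exact h3
        linarith
      exact supp_subset_of_mass_eq_one (fun q => M.stepDist_nonneg hσ hd0 _ q)
        (M.sum_stepDist hσ hd0 _) hm
    have claimB : ∀ m, m ≤ n →
        ∀ q, 0 < M.stepDist σ d0 (p + (n - m)) q → q ∈ M.Wseq T m := by
      intro m
      induction m with
      | zero => exact fun _ q _ => Set.mem_univ q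
      | succ t ih =>
        intro ht q hq
        refine ⟨hgood (n - (t+1)) (by omega) q hq, ?_⟩
        obtain ⟨qs, as, hlast, hpos⟩ := (M.stepDist_pos_iff hσ hd0 _ q).1 hq
        obtain ⟨a, ha⟩ := exists_pos_action hσ (histOf qs as) (qs (Fin.last _))
        refine ⟨a, fun q' hq' => ?_⟩
        have hstep : 0 < M.stepDist σ d0 ((p + (n - (t+1))) + 1) q' :=
          M.stepDist_pos_of_step hσ hd0 hpos ha (by rw [hlast]; exact hq')
        rw [show (p + (n - (t+1))) + 1 = p + (n - t) by omega] at hstep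
        exact ih (by omega) q' hstep
    have hSp : ∀ q, 0 < M.stepDist σ d0 p q → q ∈ M.Wseq T n := by
      have h1 := claimB n (le_refl n)
      rw [Nat.sub_self, Nat.add_zero] at h1
      exact h1
    have hPre : ∀ q ∈ M.Pre (M.Wseq T n),
        ∃ a, ∀ q', 0 < M.δ q a q' → q' ∈ M.Wseq T n := fun q hq => hq
    set safe : Q → A := fun q =>
      if hq : q ∈ M.Pre (M.Wseq T n) then (hPre q hq).choose
      else Classical.arbitrary A with hsafedef
    have hsafe : ∀ q ∈ M.Pre (M.Wseq T n),
        ∀ q', 0 < M.δ q (safe q) q' → q' ∈ M.Wseq T n := by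
      intro q hq q' h'
      have he : safe q = (hPre q hq).choose := by
        rw [hsafedef]; exact dif_pos hq
      rw [he] at h'
      exact (hPre q hq).choose_spec q' h'
    set σ' : List (Q × A) → Q → A → ℝ := fun hst q a =>
      if hst.length < p then σ hst q a else (if a = safe q then 1 else 0)
      with hσ'def
    have hσ' : IsStrategy σ' := by
      constructor
      · intro hst q a
        by_cases hl : hst.length < p
        · simp only [hσ'def, if_pos hl]; exact hσ.1 hst q a
        · simp only [hσ'def, if_neg hl]
          by_cases hsa : a = safe q <;> simp [hsa]
      · intro hst q
        by_cases hl : hst.length < p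
        · simp only [hσ'def, if_pos hl]; exact hσ.2 hst q
        · simp only [hσ'def, if_neg hl]
          simp
    have hagree : ∀ hst (q : Q) (a : A), hst.length < p → σ' hst q a = σ hst q a := by
      intro hst q a hl
      rw [hσ'def]
      exact if_pos hl
    have hinv : ∀ t, ∀ q, 0 < M.stepDist σ' d0 (p + t) q → q ∈ M.Wseq T n := by
      intro t
      induction t with
      | zero =>
        intro q hq
        rw [Nat.add_zero, M.stepDist_congr d0 p hagree q] at hq
        exact hSp q hq
      | succ t ih =>
        intro q hq
        have hq2 : 0 < M.stepDist σ' d0 ((p + t) + 1) q := hq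
        obtain ⟨qs, as, a, hp1, hp2, hp3⟩ := M.stepDist_pos_succ hσ' hd0 hq2
        have hqlast : qs (Fin.last (p+t)) ∈ M.Wseq T n :=
          ih _ ((M.stepDist_pos_iff hσ' hd0 (p+t) _).2 ⟨qs, as, rfl, hp1⟩)
        have hqPre : qs (Fin.last (p+t)) ∈ M.Pre (M.Wseq T n) := by
          rw [hW] at hqlast; exact hqlast.2
        have hlen : ¬ (histOf qs as).length < p := by
          rw [length_histOf]; omega
        have ha : a = safe (qs (Fin.last (p+t))) := by
          by_contra hne
          rw [hσ'def] at hp2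
          simp only [if_neg hlen, if_neg hne] at hp2
          exact lt_irrefl _ hp2
        rw [ha] at hp3
        exact hsafe _ hqPre q hp3
    have hmass : ∀ i ≥ p, mass (M.stepDist σ' d0 i) T = 1 := by
      intro i hi
      apply mass_eq_one_of_supp (fun q => M.stepDist_nonneg hσ' hd0 i q)
        (M.sum_stepDist hσ' hd0 i)
      intro q hq
      have h1 : q ∈ M.Wseq T n := by
        have h2 := hinv (i - p) q
        rw [show p + (i - p) = i by omega] at h2
        exact h2 hq
      rw [hW] at h1; exact h1.1
    exact h ⟨σ', hσ', p, hmass⟩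
  choose g hg1 hg2 hg3 using main
  refine ⟨fun j => Nat.rec (g 0) (fun _ prev => g (prev + 1)) j, ?_, ?_, ?_, ?_⟩
  · apply strictMono_nat_of_lt_succ
    intro j
    have h1 := hg1 ((Nat.rec (g 0) (fun _ prev => g (prev + 1)) j : ℕ) + 1)
    show (Nat.rec (g 0) (fun _ prev => g (prev + 1)) j : ℕ) <
      g ((Nat.rec (g 0) (fun _ prev => g (prev + 1)) j : ℕ) + 1)
    omega
  · have h1 := hg2 0
    show g 0 ≤ n
    omega
  · intro j
    have h1 := hg2 ((Nat.rec (g 0) (fun _ prev => g (prev + 1)) j : ℕ) + 1)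
    have h2 := hg1 ((Nat.rec (g 0) (fun _ prev => g (prev + 1)) j : ℕ) + 1)
    show g ((Nat.rec (g 0) (fun _ prev => g (prev + 1)) j : ℕ) + 1) -
      (Nat.rec (g 0) (fun _ prev => g (prev + 1)) j : ℕ) ≤ n
    omega
  · intro j
    cases j with
    | zero => exact hg3 0
    | succ t => exact hg3 _
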